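/- For an l-Grigorchuk subshift, Q(2) = 2^{l_1 + 1} − 1, where Q(v) denotes the maximal p with v^p in the language; more precisely, the maximal p with (a,x)^p ∈ L(η) equals 2^{l_1+1} − 1. -/

import Mathlib

open Filter ENNReal

/-- The left shift on infinite words. -/
def shft {A : Type*} (y : ℕ → A) : ℕ → A := fun n => y (n + 1)

/-- `w` occurs as a factor of the infinite word `y`. -/
def FactorOf {A : Type*} (w : List A) (y : ℕ → A) : Prop :=
  ∃ k, w = (List.range w.length).map fun i => y (k + i)

/-- The language of a subshift `Y`: all finite factors of elements of `Y`. -/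
def LangOf {A : Type*} (Y : Set (ℕ → A)) : Set (List A) :=
  {w | ∃ y ∈ Y, FactorOf w y}

/-- The language of an infinite word `x`: all finite factors of `x`
(equals the language of the subshift `Ω(x)` generated by `x`). -/
def LangX {A : Type*} (x : ℕ → A) : Set (List A) :=
  {w | FactorOf w x}

/-- A subshift: a closed, shift-invariant set of infinite words. -/
def IsSubshift {A : Type*} [TopologicalSpace A] (Y : Set (ℕ → A)) : Prop :=
  IsClosed Y ∧ shft '' Y = Y

/-- The subshift generated by an infinite word `x`: the closure of its shift orbit. -/
def OmegaOf {A : Type*} [TopologicalSpace A] (x : ℕ → A) : Set (ℕ → A) :=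
  closure {y | ∃ k, y = shft^[k] x}

/-- `Y` is aperiodic: it contains no periodic point. -/
def Aperiodic {A : Type*} (Y : Set (ℕ → A)) : Prop :=
  ¬ ∃ y ∈ Y, ∃ k, 0 < k ∧ shft^[k] y = y

/-- `Q(n)`: the supremum of the powers `p` such that some word `W` of length `n`
in the language `L` has `W^p ∈ L`. -/
noncomputable def QfunL {A : Type*} (L : Set (List A)) (n : ℕ) : ℕ∞ :=
  sSup ((fun q : ℕ => (q : ℕ∞)) ''
    {q | ∃ W ∈ L, W.length = n ∧ (List.replicate q W).flatten ∈ L})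

/-- The repetitive function `R(n)`: the smallest `r'` such that every word of
length `r'` in `L` contains all words of `L` of length `n` as factors
(`⊤` if no such `r'` exists). -/
noncomputable def RfunL {A : Type*} (L : Set (List A)) (n : ℕ) : ℕ∞ :=
  sInf ((fun r : ℕ => (r : ℕ∞)) ''
    {r' | ∀ u ∈ L, u.length = r' → ∀ v ∈ L, v.length = n → v <:+: u})

/-- `Q_α = limsup Q(n)/n^(α-1)`. -/
noncomputable def Qalpha {A : Type*} (L : Set (List A)) (α : ℝ) : ℝ≥0∞ :=
  Filter.atTop.limsup fun n : ℕ => (QfunL L n : ℝ≥0∞) / (n : ℝ≥0∞) ^ (α - 1)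

/-- `R_α = limsup R(n)/n^α`. -/
noncomputable def Ralpha {A : Type*} (L : Set (List A)) (α : ℝ) : ℝ≥0∞ :=
  Filter.atTop.limsup fun n : ℕ => (RfunL L n : ℝ≥0∞) / (n : ℝ≥0∞) ^ α

/-- `A_{α,n}`: the infimum of `(|W|-|w|)/|w|^(1/α)` over `w, W` in the language with
`w` a proper nonempty prefix and suffix of `W` and `|W| = n`. -/
noncomputable def AfunL {A : Type*} (L : Set (List A)) (α : ℝ) (n : ℕ) : ℝ≥0∞ :=
  sInf {t | ∃ w W : List A, w ∈ L ∧ W ∈ L ∧ w ≠ [] ∧ w ≠ W ∧ w <+: W ∧ w <:+ W ∧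
    W.length = n ∧ t = ((W.length - w.length : ℕ) : ℝ≥0∞) / (w.length : ℝ≥0∞) ^ (1 / α)}

/-- `ℓ_α = liminf_n A_{α,n}`. -/
noncomputable def lalpha {A : Type*} (L : Set (List A)) (α : ℝ) : ℝ≥0∞ :=
  Filter.atTop.liminf (AfunL L α)

/-- `ℓ`: the repulsiveness constant (no restriction on `|W|`). -/
noncomputable def lconst {A : Type*} (L : Set (List A)) : ℝ≥0∞ :=
  sInf {t | ∃ w W : List A, w ∈ L ∧ W ∈ L ∧ w ≠ [] ∧ w ≠ W ∧ w <+: W ∧ w <:+ W ∧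
    t = ((W.length - w.length : ℕ) : ℝ≥0∞) / (w.length : ℝ≥0∞)}

/-- The four-letter alphabet `{a, x, y, z}` of the Grigorchuk subshift. -/
inductive GW : Type
  | a : GW
  | x : GW
  | y : GW
  | z : GW
  deriving DecidableEq

instance instFintypeGW : Fintype GW :=
  ⟨{GW.a, GW.x, GW.y, GW.z}, fun c => by cases c <;> simp⟩

instance : TopologicalSpace GW := ⊥
instance : DiscreteTopology GW := ⟨rfl⟩
/-- The substitution `τ_b` on letters: `a ↦ (a, b, a)`, fixing the other letters. -/
def tauL (b : GW) : GW → List GW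
  | GW.a => [GW.a, b, GW.a]
  | c => [c]

/-- The substitution `τ_b` on words (monoid homomorphism). -/
def tauW (b : GW) (w : List GW) : List GW := w.flatMap (tauL b)

/-- For a sequence `l` (0-indexed: `l i` is `l_{i+1}` of the paper), `Nblk l j` is
the index of the block containing position `j`, i.e. the unique `n` with
`l 0 + ⋯ + l (n-1) ≤ j < l 0 + ⋯ + l n`;  this is `N(j) - 1` in the paper. -/
noncomputable def Nblk (l : ℕ → ℕ) (j : ℕ) : ℕ :=
  sInf {n : ℕ | j < ∑ i ∈ Finset.range (n + 1), l i}

/-- `q(j)` of the paper: `j` minus the sum of the lengths of the complete blocks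
before position `j`. -/
noncomputable def qrem (l : ℕ → ℕ) (j : ℕ) : ℕ :=
  j - ∑ i ∈ Finset.range (Nblk l j), l i

/-- The letter inserted at step `j + 1`: the blocks use `x, y, z` cyclically. -/
noncomputable def letterAt (l : ℕ → ℕ) (j : ℕ) : GW :=
  match (Nblk l j) % 3 with
  | 0 => GW.x
  | 1 => GW.y
  | _ => GW.z

/-- `gword l j = τ^{(j)}(a)`, via the recursion
`τ^{(j+1)}(a) = τ^{(j)}(a) β τ^{(j)}(a)` with `β = letterAt l j`. -/
noncomputable def gword (l : ℕ → ℕ) : ℕ → List GW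
  | 0 => [GW.a]
  | j + 1 => gword l j ++ letterAt l j :: gword l j

/-- The `l`-Grigorchuk word `η_l`: the unique infinite word having every
`τ^{(j)}(a)` as a prefix. -/
noncomputable def etaG (l : ℕ → ℕ) (n : ℕ) : GW :=
  (gword l (n + 1)).getD n GW.a

/-- The language of the `l`-Grigorchuk subshift: all factors of `η_l`. -/
noncomputable def LangG (l : ℕ → ℕ) : Set (List GW) := LangX (etaG l)

/-- The prefix of `η_l` of length `k`. -/
noncomputable def prefEta (l : ℕ → ℕ) (k : ℕ) : List GW :=
  (List.range k).map (etaG l)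

section QtwoAux

lemma two_adic : ∀ j : ℕ, j ≠ 0 → ∃ u s, j = 2^u * (2*s+1) := by
  intro j
  induction j using Nat.strong_induction_on with
  | _ j ih =>
    intro hj
    rcases Nat.even_or_odd j with he | ho
    · obtain ⟨c, hc⟩ := he
      have hcne : c ≠ 0 := by omega
      obtain ⟨u, s, hus⟩ := ih c (by omega) hcne
      exact ⟨u+1, s, by rw [show j = 2*c by omega, hus]; ring⟩
    · obtain ⟨s, hs⟩ := ho
      exact ⟨0, s, by omega⟩

variable (l : ℕ → ℕ)

lemma glen : ∀ j, (gword l j).length = 2^(j+1) - 1 := by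
  intro j
  induction j with
  | zero => rfl
  | succ j ih =>
    have h1 : (1:ℕ) ≤ 2^(j+1) := Nat.one_le_two_pow
    have h2 : (2:ℕ)^(j+2) = 2*2^(j+1) := by ring
    simp only [gword, List.length_append, List.length_cons, ih]
    omega

lemma gpref {j j'} (h : j ≤ j') : gword l j <+: gword l j' := by
  induction h with
  | refl => exact List.prefix_rfl
  | step h ih => exact ih.trans ⟨_, rfl⟩

lemma getD_stable {j j'} (h : j ≤ j') {n} (hn : n < (gword l j).length) :
    (gword l j').getD n GW.a = (gword l j).getD n GW.a := by
  obtain ⟨t, ht⟩ := gpref l h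
  rw [← ht, List.getD_append _ _ _ _ hn]

lemma nlt (n : ℕ) : n < 2^(n+2) - 1 := by
  have h0 : n < 2^n := Nat.lt_two_pow_self
  have h1 : (2:ℕ)^n ≤ 2^(n+1) := Nat.pow_le_pow_right (by norm_num) (by omega)
  have h2 : (2:ℕ)^(n+2) = 2*2^(n+1) := by ring
  omega

lemma eta_g {J n : ℕ} (hn : n < 2^(J+1) - 1) :
    etaG l n = (gword l J).getD n GW.a := by
  have hb : n < (gword l J).length := by rw [glen]; exact hn
  have hb' : n < (gword l (n+1)).length := by rw [glen]; exact nlt n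
  show (gword l (n+1)).getD n GW.a = _
  rcases le_total J (n+1) with h | h
  · rw [getD_stable l h hb]
  · rw [getD_stable l h hb']
lemma gget_even : ∀ j i, 2 ∣ i → i < 2^(j+1) - 1 → (gword l j).getD i GW.a = GW.a := by
  intro j
  induction j with
  | zero =>
    intro i _ hi
    interval_cases i
    rfl
  | succ j ih =>
    intro i hev hi
    have hlen := glen l j
    have hp : (2:ℕ)^(j+2) = 2*2^(j+1) := by ring
    have hq : (2:ℕ)^(j+1) = 2*2^j := by ring
    have h1 : (1:ℕ) ≤ 2^(j+1) := Nat.one_le_two_pow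
    have hgj : gword l (j+1) = gword l j ++ letterAt l j :: gword l j := rfl
    rcases lt_trichotomy i (2^(j+1) - 1) with h | h | h
    · rw [hgj, List.getD_append _ _ _ _ (by omega)]
      exact ih i hev h
    · exfalso
      obtain ⟨c, hc⟩ := hev
      omega
    · have hle : (gword l j).length ≤ i := by omega
      obtain ⟨c, hc⟩ := hev
      rw [hgj, List.getD_append_right _ _ _ _ hle,
        show i - (gword l j).length = (i - 2^(j+1)) + 1 by omega,
        List.getD_cons_succ]
      exact ih _ ⟨c - 2^j, by omega⟩ (by omega)

lemma gget_odd : ∀ j v s i, i + 1 = 2^(v+1) * (2*s+1) → i < 2^(j+1) - 1 →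
    (gword l j).getD i GW.a = letterAt l v := by
  intro j
  induction j with
  | zero =>
    intro v s i hdec hi
    exfalso
    have h2 : (2:ℕ) ≤ 2^(v+1) := by
      have : (2:ℕ)^1 ≤ 2^(v+1) := Nat.pow_le_pow_right (by norm_num) (by omega)
      simpa using this
    have : 2*1 ≤ 2^(v+1) * (2*s+1) := Nat.mul_le_mul h2 (by omega)
    omega
  | succ j ih =>
    intro v s i hdec hi
    have hlen := glen l j
    have hp : (2:ℕ)^(j+2) = 2*2^(j+1) := by ring
    have h1 : (1:ℕ) ≤ 2^(j+1) := Nat.one_le_two_pow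
    have hgj : gword l (j+1) = gword l j ++ letterAt l j :: gword l j := rfl
    rcases lt_trichotomy i (2^(j+1) - 1) with h | h | h
    · rw [hgj, List.getD_append _ _ _ _ (by omega)]
      exact ih v s i hdec h
    · -- i = 2^(j+1)-1 : v = j, s = 0
      have heq : 2^(v+1) * (2*s+1) = 2^(j+1) := by omega
      have hdvd : (2*s+1) ∣ 2^(j+1) := Dvd.intro_left _ heq
      have hodd : Odd (2*s+1) := ⟨s, by omega⟩
      have hs0 : 2*s+1 = 1 :=
        (hodd.coprime_two_right.pow_right (j+1)).eq_one_of_dvd hdvd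
      have heq2 : (2:ℕ)^(v+1) = 2^(j+1) := by rw [hs0, mul_one] at heq; exact heq
      have hvj : v = j := by
        have := Nat.pow_right_injective (le_refl 2) heq2
        omega
      rw [hvj]
      rw [hgj, List.getD_append_right _ _ _ _ (by omega),
        show i - (gword l j).length = 0 by omega, List.getD_cons_zero]
    · -- right half
      have hvle : v ≤ j := by
        by_contra hc
        push_neg at hc
        have h2 : (2:ℕ)^(j+2) ≤ 2^(v+1) := Nat.pow_le_pow_right (by norm_num) (by omega)
        have h3 : (2:ℕ)^(v+1) ≤ 2^(v+1)*(2*s+1) := Nat.le_mul_of_pos_right _ (by omega)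
        omega
      have hvj : v < j := by
        rcases Nat.lt_or_ge v j with h' | h'
        · exact h'
        · exfalso
          have hvj' : v = j := by omega
          subst hvj'
          have hs1 : 1 ≤ s := by
            by_contra hc
            have hs : s = 0 := by omega
            rw [hs] at hdec
            simp at hdec
            omega
          have : 2^(v+1)*3 ≤ 2^(v+1)*(2*s+1) := Nat.mul_le_mul_left _ (by omega)
          omega
      set w := j - v - 1 with hw
      have hjw : j = v + 1 + w := by omega
      have hpw : (2:ℕ)^(j+1) = 2^(v+1) * 2^(w+1) := by rw [hjw]; ring
      have hww : (2:ℕ)^(w+1) = 2*2^w := by ring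
      have hsge : 2^w ≤ s := by
        have h2s : 2^(w+1) < 2*s+1 := by
          by_contra hc
          push_neg at hc
          have : 2^(v+1) * (2*s+1) ≤ 2^(v+1) * 2^(w+1) := Nat.mul_le_mul_left _ hc
          omega
        omega
      obtain ⟨s', hs'⟩ : ∃ s', s = s' + 2^w := ⟨s - 2^w, by omega⟩
      have hsplit : 2^(v+1) * (2*s+1) = 2^(v+1)*(2*s'+1) + 2^(v+1) * 2^(w+1) := by
        rw [hs']; ring
      have hdec' : (i - 2^(j+1)) + 1 = 2^(v+1) * (2*s'+1) := by omega
      rw [hgj, List.getD_append_right _ _ _ _ (by omega),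
        show i - (gword l j).length = (i - 2^(j+1)) + 1 by omega, List.getD_cons_succ]
      exact ih v s' _ hdec' (by omega)
lemma eta_even (n : ℕ) (h : 2 ∣ n) : etaG l n = GW.a := by
  rw [eta_g l (nlt n)]
  exact gget_even l (n+1) n h (nlt n)

lemma eta_odd (n v s : ℕ) (h : n + 1 = 2^(v+1)*(2*s+1)) : etaG l n = letterAt l v := by
  rw [eta_g l (nlt n)]
  exact gget_odd l (n+1) v s n h (nlt n)

lemma sum_mono (m n : ℕ) (h : m ≤ n) :
    ∑ i ∈ Finset.range m, l i ≤ ∑ i ∈ Finset.range n, l i :=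
  Finset.sum_le_sum_of_subset (Finset.range_subset_range.mpr h)

lemma Nblk_zero (hl : ∀ i, 0 < l i) {j : ℕ} (hj : j < l 0) : Nblk l j = 0 := by
  apply Nat.sInf_eq_zero.mpr
  left
  show j < ∑ i ∈ Finset.range 1, l i
  simpa [Finset.sum_range_one] using hj

lemma Nblk_l0 (hl : ∀ i, 0 < l i) : Nblk l (l 0) = 1 := by
  have h1 : (1:ℕ) ∈ {n : ℕ | l 0 < ∑ i ∈ Finset.range (n + 1), l i} := by
    show l 0 < ∑ i ∈ Finset.range 2, l i
    rw [Finset.sum_range_succ, Finset.sum_range_one]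
    have := hl 1
    omega
  have hle : Nblk l (l 0) ≤ 1 := Nat.sInf_le h1
  have hne : Nblk l (l 0) ≠ 0 := by
    intro h0
    rcases Nat.sInf_eq_zero.mp h0 with h | h
    · simp only [Set.mem_setOf_eq, zero_add, Finset.sum_range_one] at h
      omega
    · rw [Set.eq_empty_iff_forall_notMem] at h
      exact h 1 h1
  omega

lemma Nblk_three (hl : ∀ i, 0 < l i) : Nblk l (l 0 + l 1 + l 2) = 3 := by
  set S := l 0 + l 1 + l 2 with hS
  have hsum3 : ∑ i ∈ Finset.range 3, l i = S := by
    rw [Finset.sum_range_succ, Finset.sum_range_succ, Finset.sum_range_one]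
  have h3 : (3:ℕ) ∈ {n : ℕ | S < ∑ i ∈ Finset.range (n + 1), l i} := by
    show S < ∑ i ∈ Finset.range 4, l i
    rw [Finset.sum_range_succ, hsum3]
    have := hl 3
    omega
  have hle : Nblk l S ≤ 3 := Nat.sInf_le h3
  have hmem : Nblk l S ∈ {n : ℕ | S < ∑ i ∈ Finset.range (n + 1), l i} :=
    Nat.sInf_mem ⟨3, h3⟩
  by_contra hne
  have hlt : Nblk l S + 1 ≤ 3 := by omega
  have := sum_mono l _ _ hlt
  simp only [Set.mem_setOf_eq] at hmem
  omega

lemma letterAt_x {j : ℕ} (h : Nblk l j % 3 = 0) : letterAt l j = GW.x := by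
  unfold letterAt
  rw [h]; rfl

lemma letterAt_y {j : ℕ} (h : Nblk l j % 3 = 1) : letterAt l j = GW.y := by
  unfold letterAt
  rw [h]; rfl

lemma letterAt_ne_a (j : ℕ) : letterAt l j ≠ GW.a := by
  unfold letterAt
  rcases Nblk l j % 3 with _ | _ | k <;> simp
lemma flat_len (p : ℕ) : (List.replicate p [GW.a, GW.x]).flatten.length = 2*p := by
  induction p with
  | zero => rfl
  | succ p ih =>
    rw [List.replicate_succ, List.flatten_cons, List.length_append, ih]
    simp only [List.length_cons, List.length_nil]
    omega

lemma flat_get : ∀ (p t : ℕ), t < 2*p →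
    (List.replicate p [GW.a, GW.x]).flatten.getD t GW.a
      = if t % 2 = 0 then GW.a else GW.x := by
  intro p
  induction p with
  | zero => intro t ht; omega
  | succ p ih =>
    intro t ht
    rw [List.replicate_succ, List.flatten_cons]
    match t with
    | 0 => rfl
    | 1 => rfl
    | (t+2) =>
      have : ([GW.a, GW.x] ++ (List.replicate p [GW.a, GW.x]).flatten).getD (t+2) GW.a
          = (List.replicate p [GW.a, GW.x]).flatten.getD t GW.a := rfl
      rw [this, ih t (by omega)]
      have : (t+2) % 2 = t % 2 := by omega
      rw [this]

lemma occ_spec {A : Type*} (w : List A) (y : ℕ → A) (k : ℕ)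
    (h : w = (List.range w.length).map fun i => y (k+i)) (t : ℕ) (ht : t < w.length)
    (d : A) : w.getD t d = y (k + t) := by
  conv_lhs => rw [h]
  rw [List.getD_eq_getElem _ _ (by simpa using ht), List.getElem_map, List.getElem_range]

lemma window (hl : ∀ i, 0 < l i) (S : ℕ) (hS : l 0 < S) (j : ℕ)
    (h1 : 2^S - 2^(l 0) < j) (h2 : j < 2^S + 2^(l 0)) (hj : j ≠ 2^S) :
    ∃ u s, j = 2^u * (2*s+1) ∧ u < l 0 := by
  have hpow : (2:ℕ)^(l 0) ≤ 2^S := Nat.pow_le_pow_right (by norm_num) (by omega)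
  have hpos : (1:ℕ) ≤ 2^(l 0) := Nat.one_le_two_pow
  obtain ⟨u, s, hus⟩ := two_adic j (by omega)
  refine ⟨u, s, hus, ?_⟩
  by_contra hc
  push_neg at hc
  have hd1 : (2:ℕ)^(l 0) ∣ j := by
    rw [hus]
    exact Dvd.dvd.mul_right (pow_dvd_pow 2 hc) _
  have hd2 : (2:ℕ)^(l 0) ∣ 2^S := pow_dvd_pow 2 (by omega)
  rcases Nat.lt_or_ge j (2^S) with h | h
  · have hd3 : (2:ℕ)^(l 0) ∣ 2^S - j := Nat.dvd_sub hd2 hd1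
    have := Nat.le_of_dvd (by omega) hd3
    omega
  · have hd3 : (2:ℕ)^(l 0) ∣ j - 2^S := Nat.dvd_sub hd1 hd2
    have := Nat.le_of_dvd (by omega) hd3
    omega
lemma eta_eq_if (hl : ∀ i, 0 < l i) (p k : ℕ)
    (hk : (List.replicate p [GW.a, GW.x]).flatten =
      (List.range (List.replicate p [GW.a, GW.x]).flatten.length).map
        fun i => etaG l (k + i)) (t : ℕ) (ht : t < 2*p) :
    etaG l (k + t) = if t % 2 = 0 then GW.a else GW.x := by
  rw [← occ_spec _ _ k hk t (by rw [flat_len]; exact ht) GW.a, flat_get p t ht]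

end QtwoAux

/-- in an `l`-Grigorchuk subshift, `Q(2) = 2^(l₁+1) - 1`; more
precisely, the maximal `p` with `(a,x)^p ∈ L(η)` equals `2^(l₁+1) - 1`. -/
theorem Q_two (l : ℕ → ℕ) (hl : ∀ i, 0 < l i) :
    IsGreatest {p : ℕ | (List.replicate p [GW.a, GW.x]).flatten ∈ LangG l}
      (2 ^ (l 0 + 1) - 1) := by
  have hA1 : (1:ℕ) ≤ 2^(l 0) := Nat.one_le_two_pow
  have hD : (2:ℕ)^(l 0 + 1) = 2 * 2^(l 0) := by ring
  constructor
  · -- membership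
    set m := 2^(l 0 + 1) - 1 with hm
    set S := l 0 + l 1 + l 2 with hS
    have hSgt : l 0 < S := by have := hl 1; have := hl 2; omega
    have hAS : (2:ℕ)^(l 0) ≤ 2^S := Nat.pow_le_pow_right (by norm_num) (by omega)
    have hS2 : (2:ℕ)^(S+1) = 2 * 2^S := by ring
    show FactorOf _ (etaG l)
    refine ⟨2^(S+1) - 2^(l 0 + 1), ?_⟩
    apply List.ext_getElem (by simp)
    intro t h1 h2
    rw [List.getElem_map, List.getElem_range]
    have hflen : t < 2*m := by rw [← flat_len m]; exact h1
    have hval := flat_get m t hflen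
    rw [List.getD_eq_getElem _ _ h1] at hval
    rw [hval]
    set k := 2^(S+1) - 2^(l 0 + 1) with hk
    rcases Nat.even_or_odd t with ⟨c, hc⟩ | ⟨i, hi⟩
    · -- even position
      rw [if_pos (by omega)]
      exact (eta_even l (k + t) ⟨(2^S - 2^(l 0)) + c, by omega⟩).symm
    · -- odd position
      rw [if_neg (by omega)]
      set j := 2^S - 2^(l 0) + i + 1 with hj
      have hnj : k + t + 1 = 2*j := by omega
      by_cases hjS : j = 2^S
      · have : etaG l (k + t) = letterAt l S :=
          eta_odd l (k + t) S 0 (by rw [hnj, hjS]; ring)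
        rw [this, letterAt_x l (by rw [Nblk_three l hl])]
      · obtain ⟨u, s, hus, hu⟩ := window l hl S hSgt j (by omega) (by omega) hjS
        have : etaG l (k + t) = letterAt l u :=
          eta_odd l (k + t) u s (by rw [hnj, hus]; ring)
        rw [this, letterAt_x l (by rw [Nblk_zero l hl hu])]
  · -- upper bound
    rintro p hp
    obtain ⟨k, hk⟩ := hp
    by_contra hgt
    push_neg at hgt
    have hval := eta_eq_if l hl p k hk
    -- k is even
    obtain ⟨c, hc⟩ : ∃ c, k = 2*c := by
      rcases Nat.even_or_odd k with ⟨c, hc⟩ | ⟨c, hc⟩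
      · exact ⟨c, by omega⟩
      · exfalso
        have h0 : etaG l k = GW.a := by
          have := hval 0 (by omega)
          simpa using this
        obtain ⟨u, s, hus⟩ := two_adic (k+1) (by omega)
        have hu1 : 1 ≤ u := by
          by_contra hu0
          have : u = 0 := by omega
          rw [this] at hus
          simp at hus
          omega
        obtain ⟨u', hu'⟩ : ∃ u', u = u' + 1 := ⟨u - 1, by omega⟩
        have := eta_odd l k u' s (by rw [← hu']; exact hus)
        rw [h0] at this
        exact letterAt_ne_a l u' this.symm
    -- find position with valuation exactly l 0
    have hDpos : (0:ℕ) < 2^(l 0 + 1) := by omega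
    have hdm := Nat.div_add_mod (c + 2^(l 0)) (2^(l 0 + 1))
    have hmlt := Nat.mod_lt (c + 2^(l 0)) hDpos
    set t0 := (c + 2^(l 0)) / 2^(l 0 + 1) with ht0
    set j1 := 2^(l 0 + 1) * t0 + 2^(l 0) with hj1
    have hb1 : c + 1 ≤ j1 := by omega
    have hb2 : j1 ≤ c + 2^(l 0 + 1) := by omega
    set t' := 2*j1 - 1 - 2*c with ht'
    have hkt : k + t' = 2*j1 - 1 := by omega
    have htodd : t' % 2 = 1 := by omega
    have htlt : t' < 2*p := by omega
    have hx : etaG l (k + t') = GW.x := by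
      have := hval t' htlt
      rw [if_neg (by omega)] at this
      exact this
    have hy : etaG l (k + t') = GW.y := by
      have hexp : (2:ℕ)^(l 0 + 1)*(2*t0+1) = 2*(2^(l 0 + 1)*t0) + 2*2^(l 0) := by ring
      have : etaG l (k + t') = letterAt l (l 0) :=
        eta_odd l (k + t') (l 0) t0 (by omega)
      rw [this, letterAt_y l (by rw [Nblk_l0 l hl])]
    rw [hx] at hy
    exact GW.noConfusion hy
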